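/- arXiv:2001.08877 — 3 statements merged into one kernel-verified Lean document; each statement's English description precedes it below -/
import Mathlib

section
/- Let S be a finite set of integers and A, D be integer-valued random variables with D taking values such that H(A|D) ≥ 1/2. Then there exists a universal constant c > 0 (independent of the distributions) such that E[(A-D)²] ≥ c. -/
open Finset

/-- Shannon entropy (base 2) of a random variable `X` on a finite probability
space with mass function `p`. -/
noncomputable def shannonEntropy {Ω α : Type} [Fintype Ω] [DecidableEq α]
    (p : Ω → ℝ) (X : Ω → α) : ℝ :=
  -∑ ω, p ω * Real.logb 2 (∑ ω', if X ω' = X ω then p ω' else 0)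

/-- Conditional Shannon entropy H(A | D) = H(A, D) - H(D). -/
noncomputable def condEntropy {Ω α β : Type} [Fintype Ω] [DecidableEq α] [DecidableEq β]
    (p : Ω → ℝ) (A : Ω → α) (D : Ω → β) : ℝ :=
  shannonEntropy p (fun ω => (A ω, D ω)) - shannonEntropy p D


lemma geo_sum_le (T : Finset ℕ) : ∑ n ∈ T, (1/2:ℝ)^n ≤ 2 := by
  classical
  calc ∑ n ∈ T, (1/2:ℝ)^n ≤ ∑ n ∈ Finset.range (T.sup id + 1), (1/2:ℝ)^n := by
        apply Finset.sum_le_sum_of_subset_of_nonneg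
        · intro n hn
          exact Finset.mem_range.2 (Nat.lt_succ_of_le (Finset.le_sup (f := id) hn))
        · intros; positivity
    _ ≤ 2 := by
        rw [geom_sum_eq (by norm_num : (1/2:ℝ) ≠ 1)]
        have h := pow_nonneg (by norm_num : (0:ℝ) ≤ 1/2) (T.sup id + 1)
        rw [div_le_iff_of_neg (by norm_num : (1/2:ℝ) - 1 < 0)]
        linarith

noncomputable def wt (z : ℤ) : ℝ := if z = 0 then 15/16 else (1/2)^(z.natAbs + 6)

lemma wt_pos (z : ℤ) : 0 < wt z := by
  unfold wt; split <;> positivity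

lemma wt_sum_le (T : Finset ℤ) : ∑ z ∈ T, wt z ≤ 1 := by
  classical
  rw [← Finset.sum_filter_add_sum_filter_not T (fun z => z = 0)]
  have h0 : ∑ z ∈ T.filter (fun z => z = 0), wt z ≤ 15/16 := by
    calc ∑ z ∈ T.filter (fun z => z = 0), wt z ≤ ∑ z ∈ ({0} : Finset ℤ), wt z := by
          apply Finset.sum_le_sum_of_subset_of_nonneg
          · intro z hz
            simp only [Finset.mem_filter] at hz
            simp [hz.2]
          · intros; exact (wt_pos _).le
      _ = 15/16 := by simp [wt]
  have hside : ∀ (P : Finset ℤ), (∀ z ∈ P, z ≠ 0) → (∀ z z', z ∈ P → z' ∈ P → z.natAbs = z'.natAbs → z = z') →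
      ∑ z ∈ P, wt z ≤ 1/32 := by
    intro P hP hinj
    have : ∑ z ∈ P, wt z = ∑ n ∈ P.image Int.natAbs, (1/64) * (1/2:ℝ)^n := by
      rw [Finset.sum_image (fun x hx y hy h => hinj x y hx hy h)]
      apply Finset.sum_congr rfl
      intro z hz
      rw [wt, if_neg (hP z hz), pow_add]
      ring
    rw [this, ← Finset.mul_sum]
    have := geo_sum_le (P.image Int.natAbs)
    linarith
  have hsplit : ∑ z ∈ T.filter (fun z => ¬ z = 0), wt z ≤ 1/16 := by
    rw [← Finset.sum_filter_add_sum_filter_not (T.filter (fun z => ¬ z = 0)) (fun z => 0 < z)]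
    have h1 := hside ((T.filter (fun z => ¬ z = 0)).filter (fun z => 0 < z))
      (by intro z hz; simp only [Finset.mem_filter] at hz; exact hz.1.2)
      (by intro z z' hz hz' h; simp only [Finset.mem_filter] at hz hz'; omega)
    have h2 := hside ((T.filter (fun z => ¬ z = 0)).filter (fun z => ¬ 0 < z))
      (by intro z hz; simp only [Finset.mem_filter] at hz; exact hz.1.2)
      (by intro z z' hz hz' h; simp only [Finset.mem_filter] at hz hz'; omega)
    linarith
  linarith

lemma cond_le {Ω : Type} [Fintype Ω] (p : Ω → ℝ) (A D : Ω → ℤ)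
    (hp : ∀ ω, 0 ≤ p ω) (hs : ∑ ω, p ω = 1) :
    condEntropy p A D ≤ ∑ ω, p ω * (-Real.logb 2 (wt (A ω - D ω))) := by
  classical
  set φ : Ω → ℤ × ℤ := fun ω => (A ω - D ω, D ω) with hφ
  set Q : ℤ × ℤ → ℝ := fun v => ∑ ω, if φ ω = v then p ω else 0 with hQdef
  set QD : ℤ → ℝ := fun d => ∑ ω, if D ω = d then p ω else 0 with hQDdef
  have hQnn : ∀ v, 0 ≤ Q v := by
    intro v; apply Finset.sum_nonneg; intro ω _; split <;> simp [hp ω]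
  have hQDnn : ∀ d, 0 ≤ QD d := by
    intro d; apply Finset.sum_nonneg; intro ω _; split <;> simp [hp ω]
  -- step 1 : rewrite condEntropy
  have e1 : condEntropy p A D
      = ∑ ω, p ω * (Real.logb 2 (QD (D ω)) - Real.logb 2 (Q (φ ω))) := by
    unfold condEntropy shannonEntropy
    have h1 : ∀ ω : Ω, (∑ ω', if (A ω', D ω') = (A ω, D ω) then p ω' else 0) = Q (φ ω) := by
      intro ω
      apply Finset.sum_congr rfl
      intro ω' _
      congr 1
      simp only [hφ, Prod.mk.injEq, eq_iff_iff]
      constructor <;> rintro ⟨h1, h2⟩ <;> exact ⟨by omega, h2⟩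
    simp only [h1]
    simp only [mul_sub, Finset.sum_sub_distrib]
    ring
  rw [e1]
  -- step 2 : pointwise bound
  have key : ∀ ω, p ω * (Real.logb 2 (QD (D ω)) - Real.logb 2 (Q (φ ω)))
      ≤ p ω * (-Real.logb 2 (wt (A ω - D ω)))
        + (p ω * (QD (D ω) * wt (A ω - D ω) / Q (φ ω)) - p ω) / Real.log 2 := by
    intro ω
    rcases eq_or_lt_of_le (hp ω) with h0 | hpos
    · simp [← h0]
    · have hQpos : 0 < Q (φ ω) := by
        refine lt_of_lt_of_le hpos ?_
        have := Finset.single_le_sum (f := fun ω' => if φ ω' = φ ω then p ω' else 0)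
          (fun i _ => by split <;> simp [hp i]) (Finset.mem_univ ω)
        simpa using this
      have hQDpos : 0 < QD (D ω) := by
        refine lt_of_lt_of_le hpos ?_
        have := Finset.single_le_sum (f := fun ω' => if D ω' = D ω then p ω' else 0)
          (fun i _ => by split <;> simp [hp i]) (Finset.mem_univ ω)
        simpa using this
      have hw := wt_pos (A ω - D ω)
      have hid : Real.logb 2 (QD (D ω)) - Real.logb 2 (Q (φ ω)) + Real.logb 2 (wt (A ω - D ω))
          = Real.logb 2 (QD (D ω) * wt (A ω - D ω) / Q (φ ω)) := by
        rw [Real.logb_div (by positivity) (by positivity), Real.logb_mul (by positivity) (by positivity)]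
        ring
      have hlog : Real.logb 2 (QD (D ω) * wt (A ω - D ω) / Q (φ ω))
          ≤ (QD (D ω) * wt (A ω - D ω) / Q (φ ω) - 1) / Real.log 2 := by
        rw [Real.logb]
        have h1 : Real.log (QD (D ω) * wt (A ω - D ω) / Q (φ ω))
            ≤ QD (D ω) * wt (A ω - D ω) / Q (φ ω) - 1 :=
          Real.log_le_sub_one_of_pos (by positivity)
        have h2 : (0:ℝ) < Real.log 2 := Real.log_pos (by norm_num)
        gcongr
      have hX : Real.logb 2 (QD (D ω)) - Real.logb 2 (Q (φ ω))
          = Real.logb 2 (QD (D ω) * wt (A ω - D ω) / Q (φ ω))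
            - Real.logb 2 (wt (A ω - D ω)) := by linarith
      rw [hX]
      have h3 := mul_le_mul_of_nonneg_left hlog (hp ω)
      have h4 : p ω * ((QD (D ω) * wt (A ω - D ω) / Q (φ ω) - 1) / Real.log 2)
          = (p ω * (QD (D ω) * wt (A ω - D ω) / Q (φ ω)) - p ω) / Real.log 2 := by ring
      nlinarith [h3, h4]
  -- step 3 : sum the pointwise bounds
  have step3 := Finset.sum_le_sum (s := Finset.univ) (fun ω _ => key ω)
  refine step3.trans ?_
  rw [Finset.sum_add_distrib]
  have hS : ∑ ω, p ω * (QD (D ω) * wt (A ω - D ω) / Q (φ ω)) ≤ 1 := by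
    have grp : ∑ ω, p ω * (QD (D ω) * wt (A ω - D ω) / Q (φ ω))
        = ∑ v ∈ Finset.univ.image φ, Q v * (QD v.2 * wt v.1 / Q v) := by
      rw [← Finset.sum_fiberwise_of_maps_to (g := φ)
        (fun ω _ => Finset.mem_image_of_mem φ (Finset.mem_univ ω))
        (fun ω => p ω * (QD (D ω) * wt (A ω - D ω) / Q (φ ω)))]
      apply Finset.sum_congr rfl
      intro v hv
      have : ∀ ω ∈ Finset.univ.filter (fun ω => φ ω = v),
          p ω * (QD (D ω) * wt (A ω - D ω) / Q (φ ω))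
          = p ω * (QD v.2 * wt v.1 / Q v) := by
        intro ω hω
        have hf : φ ω = v := (Finset.mem_filter.1 hω).2
        have hD : D ω = v.2 := by rw [← hf]
        have hZ : A ω - D ω = v.1 := by rw [← hf]
        rw [hZ, hD, hf]
      rw [Finset.sum_congr rfl this, ← Finset.sum_mul]
      congr 1
      rw [hQdef]
      rw [Finset.sum_filter]
    rw [grp]
    have bnd : ∀ v ∈ Finset.univ.image φ, Q v * (QD v.2 * wt v.1 / Q v)
        ≤ QD v.2 * wt v.1 := by
      intro v _
      rcases eq_or_lt_of_le (hQnn v) with h0 | hq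
      · rw [← h0]
        simp only [zero_mul, div_zero, mul_zero]
        exact mul_nonneg (hQDnn v.2) (wt_pos v.1).le
      · rw [mul_comm, div_mul_cancel₀ _ (ne_of_gt hq)]
    refine (Finset.sum_le_sum bnd).trans ?_
    have hsub : Finset.univ.image φ
        ⊆ ((Finset.univ.image φ).image Prod.fst) ×ˢ ((Finset.univ.image φ).image Prod.snd) := by
      intro v hv
      exact Finset.mem_product.2 ⟨Finset.mem_image_of_mem _ hv, Finset.mem_image_of_mem _ hv⟩
    refine (Finset.sum_le_sum_of_subset_of_nonneg hsub
      (fun v _ _ => by have := hQDnn v.2; have := wt_pos v.1; positivity)).trans ?_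
    rw [Finset.sum_product]
    have factor : ∀ z ∈ (Finset.univ.image φ).image Prod.fst,
        ∑ d ∈ (Finset.univ.image φ).image Prod.snd, QD d * wt z
        = wt z * ∑ d ∈ (Finset.univ.image φ).image Prod.snd, QD d := by
      intro z _
      rw [Finset.mul_sum]
      apply Finset.sum_congr rfl
      intros; ring
    rw [Finset.sum_congr rfl factor, ← Finset.sum_mul]
    have hQD1 : ∑ d ∈ (Finset.univ.image φ).image Prod.snd, QD d ≤ 1 := by
      rw [hQDdef]
      rw [Finset.sum_comm]
      calc ∑ ω, ∑ d ∈ (Finset.univ.image φ).image Prod.snd, (if D ω = d then p ω else 0)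
          ≤ ∑ ω, p ω := by
            apply Finset.sum_le_sum
            intro ω _
            rw [Finset.sum_ite_eq]
            split
            · exact le_refl _
            · exact hp ω
        _ = 1 := hs
    have hwt1 := wt_sum_le ((Finset.univ.image φ).image Prod.fst)
    have hwnn : (0:ℝ) ≤ ∑ z ∈ (Finset.univ.image φ).image Prod.fst, wt z :=
      Finset.sum_nonneg (fun z _ => (wt_pos z).le)
    have hQDnn' : (0:ℝ) ≤ ∑ d ∈ (Finset.univ.image φ).image Prod.snd, QD d :=
      Finset.sum_nonneg (fun d _ => hQDnn d)
    nlinarith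
  have : ∑ ω, (p ω * (QD (D ω) * wt (A ω - D ω) / Q (φ ω)) - p ω) / Real.log 2 ≤ 0 := by
    rw [← Finset.sum_div, Finset.sum_sub_distrib, hs]
    apply div_nonpos_of_nonpos_of_nonneg
    · linarith
    · exact (Real.log_pos (by norm_num)).le
  linarith

lemma neg_logb_wt_le (z : ℤ) : -Real.logb 2 (wt z) ≤ Real.logb 2 (16/15) + 7 * (z:ℝ)^2 := by
  unfold wt
  split
  · rename_i h
    subst h
    have : ((15:ℝ)/16) = (16/15)⁻¹ := by norm_num
    rw [this, Real.logb_inv]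
    simp
  · rename_i h
    have hn : 1 ≤ z.natAbs := by omega
    have hcast : ((z.natAbs : ℝ))^2 = (z:ℝ)^2 := by
      rw [Nat.cast_natAbs]
      push_cast
      rw [sq_abs]
    have hl : Real.logb 2 ((1/2:ℝ)^(z.natAbs + 6)) = -((z.natAbs : ℝ) + 6) := by
      rw [Real.logb_pow]
      have : ((1:ℝ)/2) = 2⁻¹ := by norm_num
      rw [this, Real.logb_inv, Real.logb_self_eq_one (by norm_num : (1:ℝ) < 2)]
      push_cast
      ring
    rw [hl]
    have hlb : (0:ℝ) ≤ Real.logb 2 (16/15) := Real.logb_nonneg (by norm_num) (by norm_num)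
    have hn' : (1:ℝ) ≤ (z.natAbs : ℝ) := by exact_mod_cast hn
    nlinarith [hcast]

/-- If `A, D` are integer-valued random variables (finite ranges) with
conditional entropy `H(A|D) ≥ 1/2`, then `E[(A-D)²] ≥ c` for a universal
constant `c > 0`. -/
theorem entropy_to_L2_lower_bound :
    ∃ c : ℝ, c > 0 ∧
      ∀ (Ω : Type) (_ : Fintype Ω) (p : Ω → ℝ) (A D : Ω → ℤ),
        (∀ ω, 0 ≤ p ω) → (∑ ω, p ω) = 1 →
        condEntropy p A D ≥ 1 / 2 →
        (∑ ω, p ω * ((A ω : ℝ) - (D ω : ℝ)) ^ 2) ≥ c := by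
  refine ⟨1/25, by norm_num, ?_⟩
  intro Ω _ p A D hp hs hH
  have h1 := cond_le p A D hp hs
  have h2 : ∑ ω, p ω * (-Real.logb 2 (wt (A ω - D ω)))
      ≤ Real.logb 2 (16/15) + 7 * ∑ ω, p ω * ((A ω : ℝ) - (D ω : ℝ))^2 := by
    have step : ∑ ω, p ω * (-Real.logb 2 (wt (A ω - D ω)))
        ≤ ∑ ω, p ω * (Real.logb 2 (16/15) + 7 * ((A ω : ℝ) - (D ω : ℝ))^2) := by
      apply Finset.sum_le_sum
      intro ω _
      have := neg_logb_wt_le (A ω - D ω)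
      have hc : ((A ω - D ω : ℤ) : ℝ) = (A ω : ℝ) - (D ω : ℝ) := by push_cast; ring
      rw [hc] at this
      exact mul_le_mul_of_nonneg_left this (hp ω)
    refine step.trans_eq ?_
    simp only [mul_add, Finset.sum_add_distrib]
    rw [← Finset.sum_mul, hs, Finset.mul_sum]
    rw [Finset.sum_congr rfl (fun ω _ => by ring :
      ∀ ω ∈ Finset.univ, p ω * (7 * ((A ω : ℝ) - (D ω : ℝ))^2)
        = 7 * (p ω * ((A ω : ℝ) - (D ω : ℝ))^2)), ← Finset.mul_sum]
    ring
  have hlog : Real.logb 2 (16/15) ≤ 0.22 := by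
    have ha : Real.log (16/15) ≤ 1/15 := by
      have := Real.log_le_sub_one_of_pos (show (0:ℝ) < 16/15 by norm_num)
      linarith
    have hb := Real.log_two_gt_d9
    rw [Real.logb, div_le_iff₀ (by linarith : (0:ℝ) < Real.log 2)]
    nlinarith
  linarith
end

section
/- Let θ be uniformly distributed on K_S = {i/S : i = 0,...,S−1} with S = 2^{B+1}, and let θ̂ be an estimator taking values in K_S such that I(θ̂; θ) ≤ B (in bits). Then H(θ | θ̂) ≥ 1, and consequently there is a universal constant c > 0 with E[(θ̂ − θ)²] ≥ c·2^{−2B}. -/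
open Finset

/-- Mutual information I(X; Y) = H(X) + H(Y) - H(X, Y). -/
noncomputable def mutualInfo {Ω α β : Type} [Fintype Ω] [DecidableEq α] [DecidableEq β]
    (p : Ω → ℝ) (X : Ω → α) (Y : Ω → β) : ℝ :=
  shannonEntropy p X + shannonEntropy p Y - shannonEntropy p (fun ω => (X ω, Y ω))

noncomputable def qfun (x : ℝ) : ℝ := if x = 0 then 3/4 else 1/(16*x^2)

lemma qfun_pos (x : ℝ) : 0 < qfun x := by
  unfold qfun; split
  · norm_num
  · rename_i h; positivity

lemma sum_inv_sq_aux (N : ℕ) (hN : 1 ≤ N) :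
    ∑ k ∈ Finset.Icc 1 N, (1:ℝ)/(k:ℝ)^2 ≤ 2 - 1/(N:ℝ) := by
  induction N with
  | zero => omega
  | succ n ih =>
    rcases Nat.eq_zero_or_pos n with h | h
    · subst h; norm_num
    · rw [Finset.sum_Icc_succ_top (by omega)]
      have hn : (1:ℝ) ≤ (n:ℝ) := by exact_mod_cast h
      have h2 : (1:ℝ)/((n+1:ℕ):ℝ)^2 ≤ 1/(n:ℝ) - 1/((n+1:ℕ):ℝ) := by
        rw [div_sub_div _ _ (by linarith) (by push_cast; linarith)]
        rw [div_le_div_iff₀ (by positivity) (by push_cast; positivity)]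
        push_cast; nlinarith
      have := ih h
      push_cast at *
      linarith

lemma sum_inv_sq_le (T : Finset ℕ) (hT : ∀ k ∈ T, 1 ≤ k) :
    ∑ k ∈ T, (1:ℝ)/(k:ℝ)^2 ≤ 2 := by
  rcases T.eq_empty_or_nonempty with h | h
  · simp [h]
  · have hsub : T ⊆ Finset.Icc 1 (T.max' h) := by
      intro k hk
      exact Finset.mem_Icc.mpr ⟨hT k hk, Finset.le_max' T k hk⟩
    calc ∑ k ∈ T, (1:ℝ)/(k:ℝ)^2 ≤ ∑ k ∈ Finset.Icc 1 (T.max' h), (1:ℝ)/(k:ℝ)^2 :=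
          Finset.sum_le_sum_of_subset_of_nonneg hsub (by intros; positivity)
      _ ≤ 2 - 1/(T.max' h : ℝ) := sum_inv_sq_aux _ (hT _ (T.max'_mem h))
      _ ≤ 2 := by
          have : (0:ℝ) < (T.max' h : ℝ) := by exact_mod_cast hT _ (T.max'_mem h)
          have : 0 < 1/(T.max' h : ℝ) := by positivity
          linarith

lemma qsum_sign_part (T : Finset ℤ) (hpos : ∀ k ∈ T, 0 < k) :
    ∑ k ∈ T, (1:ℝ)/(16*(k:ℝ)^2) ≤ 1/8 := by
  have hinj : ∀ a ∈ T, ∀ b ∈ T, a.toNat = b.toNat → a = b := by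
    intro a ha b hb hab
    have := hpos a ha; have := hpos b hb; omega
  have hstep : ∑ n ∈ T.image Int.toNat, (1:ℝ)/(16*(n:ℝ)^2)
      = ∑ k ∈ T, (1:ℝ)/(16*(k:ℝ)^2) := by
    rw [Finset.sum_image hinj]
    apply Finset.sum_congr rfl
    intro k hk
    have : ((k.toNat : ℕ) : ℝ) = (k : ℝ) := by
      have := hpos k hk; exact_mod_cast Int.toNat_of_nonneg (le_of_lt this)
    rw [this]
  rw [← hstep]
  calc ∑ n ∈ T.image Int.toNat, (1:ℝ)/(16*(n:ℝ)^2)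
      = (1/16) * ∑ n ∈ T.image Int.toNat, (1:ℝ)/(n:ℝ)^2 := by
        rw [Finset.mul_sum]; apply Finset.sum_congr rfl; intros n _
        field_simp
    _ ≤ (1/16) * 2 := by
        apply mul_le_mul_of_nonneg_left _ (by norm_num)
        apply sum_inv_sq_le
        intro n hn
        simp only [Finset.mem_image] at hn
        obtain ⟨k, hk, rfl⟩ := hn
        have := hpos k hk; omega
    _ = 1/8 := by norm_num

lemma qsum_int (T : Finset ℤ) : ∑ k ∈ T, qfun (k:ℝ) ≤ 1 := by
  classical
  have hsub : T ⊆ insert 0 (T.erase 0) := by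
    intro k hk
    by_cases h : k = 0
    · simp [h]
    · exact Finset.mem_insert_of_mem (Finset.mem_erase.mpr ⟨h, hk⟩)
  have h1 : ∑ k ∈ T, qfun (k:ℝ) ≤ ∑ k ∈ insert 0 (T.erase 0), qfun (k:ℝ) :=
    Finset.sum_le_sum_of_subset_of_nonneg hsub (fun k _ _ => (qfun_pos _).le)
  rw [Finset.sum_insert (Finset.notMem_erase 0 T)] at h1
  have hq0 : qfun ((0:ℤ):ℝ) = 3/4 := by norm_num [qfun]
  -- split erase into pos and neg
  set E := T.erase 0 with hE
  have hsplit : E = (E.filter (fun k => 0 < k)) ∪ (E.filter (fun k => ¬ 0 < k)) :=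
    (Finset.filter_union_filter_not_eq _ E).symm
  have h2 : ∑ k ∈ E, qfun (k:ℝ)
      = ∑ k ∈ E.filter (fun k => 0 < k), qfun (k:ℝ)
      + ∑ k ∈ E.filter (fun k => ¬ 0 < k), qfun (k:ℝ) := by
    rw [hsplit, Finset.sum_union (Finset.disjoint_filter_filter_not E E _)]
    rw [← hsplit]
  have hqform : ∀ k : ℤ, k ≠ 0 → qfun (k:ℝ) = 1/(16*(k:ℝ)^2) := by
    intro k hk
    have : ((k:ℝ)) ≠ 0 := Int.cast_ne_zero.mpr hk
    simp [qfun, this]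
  have hpos : ∑ k ∈ E.filter (fun k => 0 < k), qfun (k:ℝ) ≤ 1/8 := by
    rw [Finset.sum_congr rfl (fun k hk => hqform k (by
      have := Finset.mem_filter.mp hk; omega))]
    exact qsum_sign_part _ (fun k hk => (Finset.mem_filter.mp hk).2)
  have hneg : ∑ k ∈ E.filter (fun k => ¬ 0 < k), qfun (k:ℝ) ≤ 1/8 := by
    have hinj : ∀ a ∈ E.filter (fun k => ¬ 0 < k), ∀ b ∈ E.filter (fun k => ¬ 0 < k),
        -a = -b → a = b := fun a _ b _ h => by omega
    have himg : ∑ k ∈ (E.filter (fun k => ¬ 0 < k)).image (fun k => -k), qfun (k:ℝ)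
        = ∑ k ∈ E.filter (fun k => ¬ 0 < k), qfun ((-k : ℤ):ℝ) :=
      Finset.sum_image hinj
    have heq : ∀ k : ℤ, qfun ((-k:ℤ):ℝ) = qfun (k:ℝ) := by
      intro k
      simp only [qfun, Int.cast_neg, neg_eq_zero, neg_sq]
    rw [← Finset.sum_congr rfl (fun k _ => heq k), ← himg]
    rw [Finset.sum_congr rfl (fun k hk => hqform k (by
      simp only [Finset.mem_image, Finset.mem_filter, hE, Finset.mem_erase] at hk
      obtain ⟨a, ⟨⟨ha0, _⟩, _⟩, rfl⟩ := hk
      omega))]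
    apply qsum_sign_part
    intro k hk
    simp only [Finset.mem_image, Finset.mem_filter, hE, Finset.mem_erase] at hk
    obtain ⟨a, ⟨⟨ha0, _⟩, ha2⟩, rfl⟩ := hk
    omega
  calc ∑ k ∈ T, qfun (k:ℝ) ≤ qfun ((0:ℤ):ℝ) + ∑ k ∈ E, qfun (k:ℝ) := h1
    _ ≤ 3/4 + (1/8 + 1/8) := by rw [hq0, h2]; linarith
    _ = 1 := by norm_num

lemma qsum_real (T : Finset ℝ) (h : ∀ x ∈ T, ∃ k : ℤ, x = (k:ℝ)) :
    ∑ x ∈ T, qfun x ≤ 1 := by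
  have hfl : ∀ x ∈ T, ((⌊x⌋ : ℤ) : ℝ) = x := by
    intro x hx; obtain ⟨k, rfl⟩ := h x hx; simp
  have hinj : ∀ a ∈ T, ∀ b ∈ T, ⌊a⌋ = ⌊b⌋ → a = b := by
    intro a ha b hb hab
    rw [← hfl a ha, ← hfl b hb, hab]
  refine le_trans (le_of_eq ?_) (qsum_int (T.image fun x => ⌊x⌋))
  rw [Finset.sum_image hinj]
  exact Finset.sum_congr rfl (fun x hx => by rw [hfl x hx])

lemma logb_two_pos : (0:ℝ) < Real.log 2 := Real.log_pos (by norm_num)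

lemma neg_logb_qfun (k : ℤ) :
    -Real.logb 2 (qfun (k:ℝ)) ≤ Real.logb 2 (4/3) + 6 * (k:ℝ)^2 := by
  by_cases hk : k = 0
  · subst hk
    have hq : qfun ((0:ℤ):ℝ) = ((4:ℝ)/3)⁻¹ := by norm_num [qfun]
    rw [hq, Real.logb_inv, neg_neg]
    simp
  · have hkr : ((k:ℝ)) ≠ 0 := Int.cast_ne_zero.mpr hk
    have hk1 : (1:ℝ) ≤ (k:ℝ)^2 := by
      have h1 : (1:ℤ) ≤ k^2 := by rcases lt_or_gt_of_ne hk with h|h <;> nlinarith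
      exact_mod_cast h1
    rw [show qfun (k:ℝ) = 1/(16*(k:ℝ)^2) by simp [qfun, hkr]]
    rw [one_div, Real.logb_inv, neg_neg]
    have h16 : Real.logb 2 (16*(k:ℝ)^2) = 4 + Real.logb 2 ((k:ℝ)^2) := by
      rw [Real.logb_mul (by norm_num) (by positivity)]
      congr 1
      rw [show (16:ℝ) = 2^(4:ℕ) by norm_num, Real.logb_pow,
        Real.logb_self_eq_one (by norm_num)]
      norm_num
    rw [h16]
    have hlog : Real.logb 2 ((k:ℝ)^2) ≤ 3 * ((k:ℝ)^2 - 1) := by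
      have h1 : Real.log ((k:ℝ)^2) ≤ (k:ℝ)^2 - 1 :=
        Real.log_le_sub_one_of_pos (by positivity)
      have h2 : (1:ℝ)/3 ≤ Real.log 2 := by
        have := Real.log_two_gt_d9; linarith
      rw [Real.logb, div_le_iff₀ logb_two_pos]
      nlinarith
    have hlogb43 : (0:ℝ) ≤ Real.logb 2 (4/3) :=
      Real.logb_nonneg (by norm_num) (by norm_num)
    nlinarith

lemma T_le_one {Ω : Type} [Fintype Ω] (p : Ω → ℝ) (hp : ∀ ω, 0 ≤ p ω)
    (hsum : ∑ ω, p ω = 1) (A D : Ω → ℝ) (S : ℝ) (hS : S ≠ 0)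
    (hint : ∀ ω, ∃ k : ℤ, S * (D ω - A ω) = (k:ℝ)) :
    ∑ ω, p ω * qfun (S * (D ω - A ω)) * (∑ ω', if D ω' = D ω then p ω' else 0)
      / (∑ ω', if (A ω', D ω') = (A ω, D ω) then p ω' else 0) ≤ 1 := by
  classical
  set PD : ℝ → ℝ := fun d => ∑ ω', if D ω' = d then p ω' else 0 with hPDdef
  set PAD : ℝ × ℝ → ℝ := fun v => ∑ ω', if (A ω', D ω') = v then p ω' else 0 with hPADdef
  have hPDnn : ∀ d, 0 ≤ PD d := by
    intro d; apply Finset.sum_nonneg; intro ω' _; split <;> simp [hp ω']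
  set V : Finset (ℝ × ℝ) := Finset.univ.image (fun ω => (A ω, D ω)) with hV
  set f : Ω → ℝ := fun ω => p ω * qfun (S * (D ω - A ω)) * PD (D ω) / PAD (A ω, D ω) with hf
  have hfib : ∑ v ∈ V, ∑ ω ∈ Finset.univ.filter (fun ω => (A ω, D ω) = v), f ω
      = ∑ ω, f ω :=
    Finset.sum_fiberwise_of_maps_to (fun ω _ => Finset.mem_image_of_mem _ (Finset.mem_univ ω)) f
  have hPADfib : ∀ v : ℝ × ℝ,
      ∑ ω ∈ Finset.univ.filter (fun ω => (A ω, D ω) = v), p ω = PAD v := by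
    intro v
    rw [Finset.sum_filter]
  have hstepB : ∀ v ∈ V,
      ∑ ω ∈ Finset.univ.filter (fun ω => (A ω, D ω) = v), f ω
        ≤ qfun (S * (v.2 - v.1)) * PD v.2 := by
    intro v _
    have hcongr : ∀ ω ∈ Finset.univ.filter (fun ω => (A ω, D ω) = v),
        f ω = qfun (S * (v.2 - v.1)) * PD v.2 / PAD v * p ω := by
      intro ω hω
      have hmem := (Finset.mem_filter.mp hω).2
      have hA : A ω = v.1 := by rw [← hmem]
      have hD : D ω = v.2 := by rw [← hmem]
      simp only [hf, hA, hD, hmem]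
      ring
    rw [Finset.sum_congr rfl hcongr, ← Finset.mul_sum, hPADfib v]
    rcases eq_or_lt_of_le (by
      apply Finset.sum_nonneg; intro ω' _; split <;> simp [hp ω'] : (0:ℝ) ≤ PAD v) with h0 | h0
    · rw [← h0]
      simp only [div_zero, zero_mul, mul_zero]
      exact mul_nonneg (qfun_pos _).le (hPDnn _)
    · rw [div_mul_cancel₀]
      exact ne_of_gt h0
  have hTle : ∑ ω, f ω ≤ ∑ v ∈ V, qfun (S * (v.2 - v.1)) * PD v.2 := by
    rw [← hfib]
    exact Finset.sum_le_sum hstepB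
  -- now group V by second coordinate
  set VD : Finset ℝ := Finset.univ.image D with hVD
  have hVsnd : ∀ v ∈ V, v.2 ∈ VD := by
    intro v hv
    simp only [hV, Finset.mem_image] at hv
    obtain ⟨ω, _, rfl⟩ := hv
    exact Finset.mem_image_of_mem _ (Finset.mem_univ ω)
  have hfib2 : ∑ d ∈ VD, ∑ v ∈ V.filter (fun v => v.2 = d), qfun (S * (v.2 - v.1)) * PD v.2
      = ∑ v ∈ V, qfun (S * (v.2 - v.1)) * PD v.2 :=
    Finset.sum_fiberwise_of_maps_to hVsnd _
  have hinner : ∀ d ∈ VD,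
      ∑ v ∈ V.filter (fun v => v.2 = d), qfun (S * (v.2 - v.1)) * PD v.2 ≤ PD d := by
    intro d _
    have hcongr : ∀ v ∈ V.filter (fun v => v.2 = d),
        qfun (S * (v.2 - v.1)) * PD v.2 = qfun (S * (d - v.1)) * PD d := by
      intro v hv
      have h2 := (Finset.mem_filter.mp hv).2
      rw [h2]
    rw [Finset.sum_congr rfl hcongr]
    have : ∑ v ∈ V.filter (fun v => v.2 = d), qfun (S * (d - v.1)) * PD d
        = (∑ v ∈ V.filter (fun v => v.2 = d), qfun (S * (d - v.1))) * PD d := by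
      rw [Finset.sum_mul]
    rw [this]
    have hqle : ∑ v ∈ V.filter (fun v => v.2 = d), qfun (S * (d - v.1)) ≤ 1 := by
      have hinj : ∀ a ∈ V.filter (fun v => v.2 = d), ∀ b ∈ V.filter (fun v => v.2 = d),
          S * (d - a.1) = S * (d - b.1) → a = b := by
        intro a ha b hb hab
        have ha2 := (Finset.mem_filter.mp ha).2
        have hb2 := (Finset.mem_filter.mp hb).2
        have : a.1 = b.1 := by
          have := mul_left_cancel₀ hS hab
          linarith
        exact Prod.ext this (ha2.trans hb2.symm)
      refine le_trans (le_of_eq ?_)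
        (qsum_real ((V.filter (fun v => v.2 = d)).image (fun v => S * (d - v.1))) ?_)
      · rw [Finset.sum_image hinj]
      intro x hx
      obtain ⟨v, hv, rfl⟩ := Finset.mem_image.mp hx
      obtain ⟨hvV, hv2⟩ := Finset.mem_filter.mp hv
      rw [hV] at hvV
      obtain ⟨ω, _, rfl⟩ := Finset.mem_image.mp hvV
      simp only at hv2 ⊢
      rw [← hv2]
      exact hint ω
    calc (∑ v ∈ V.filter (fun v => v.2 = d), qfun (S * (d - v.1))) * PD d
        ≤ 1 * PD d := mul_le_mul_of_nonneg_right hqle (hPDnn d)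
      _ = PD d := one_mul _
  have hPDsum : ∑ d ∈ VD, PD d = 1 := by
    have := Finset.sum_fiberwise_of_maps_to
      (fun ω _ => Finset.mem_image_of_mem D (Finset.mem_univ ω) : ∀ ω ∈ Finset.univ, D ω ∈ VD) p
    rw [← hsum, ← this]
    apply Finset.sum_congr rfl
    intro d _
    rw [Finset.sum_filter]
  calc ∑ ω, f ω ≤ ∑ v ∈ V, qfun (S * (v.2 - v.1)) * PD v.2 := hTle
    _ = ∑ d ∈ VD, ∑ v ∈ V.filter (fun v => v.2 = d), qfun (S * (v.2 - v.1)) * PD v.2 := hfib2.symm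
    _ ≤ ∑ d ∈ VD, PD d := Finset.sum_le_sum hinner
    _ = 1 := hPDsum

lemma condEntropy_eq {Ω : Type} [Fintype Ω] (p : Ω → ℝ) (A D : Ω → ℝ) :
    condEntropy p A D = ∑ ω, p ω * (Real.logb 2 (∑ ω', if D ω' = D ω then p ω' else 0)
      - Real.logb 2 (∑ ω', if (A ω', D ω') = (A ω, D ω) then p ω' else 0)) := by
  unfold condEntropy shannonEntropy
  simp only []
  rw [show ∀ a b : ℝ, -a - -b = b - a from fun a b => by ring]
  rw [← Finset.sum_sub_distrib]
  exact Finset.sum_congr rfl (fun ω _ => by rw [mul_sub])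

lemma key_bound {Ω : Type} [Fintype Ω] (p : Ω → ℝ) (hp : ∀ ω, 0 ≤ p ω)
    (hsum : ∑ ω, p ω = 1) (A D : Ω → ℝ) (S : ℝ) (hS : S ≠ 0)
    (hint : ∀ ω, ∃ k : ℤ, S * (D ω - A ω) = (k:ℝ)) :
    condEntropy p A D ≤ Real.logb 2 (4/3) + 6 * S^2 * ∑ ω, p ω * (D ω - A ω)^2 := by
  classical
  set pD : Ω → ℝ := fun ω => ∑ ω', if D ω' = D ω then p ω' else 0 with hpDdef
  set pAD : Ω → ℝ := fun ω => ∑ ω', if (A ω', D ω') = (A ω, D ω) then p ω' else 0 with hpADdef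
  set Q : Ω → ℝ := fun ω => qfun (S * (D ω - A ω)) with hQdef
  have hCE : condEntropy p A D = ∑ ω, p ω * (Real.logb 2 (pD ω) - Real.logb 2 (pAD ω)) :=
    condEntropy_eq p A D
  have hple : ∀ ω, p ω ≤ pAD ω := by
    intro ω
    have := Finset.single_le_sum (f := fun ω' => if (A ω', D ω') = (A ω, D ω) then p ω' else 0)
      (fun ω' _ => by split <;> simp [hp ω']) (Finset.mem_univ ω)
    rw [if_pos rfl] at this
    exact this
  have hADle : ∀ ω, pAD ω ≤ pD ω := by
    intro ω
    apply Finset.sum_le_sum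
    intro ω' _
    by_cases h : (A ω', D ω') = (A ω, D ω)
    · have h2 : D ω' = D ω := congrArg Prod.snd h
      rw [if_pos h, if_pos h2]
    · rw [if_neg h]
      split
      · exact hp ω'
      · exact le_refl _
  have hpoint : ∀ ω, p ω * (Real.logb 2 (pD ω) - Real.logb 2 (pAD ω))
      ≤ p ω * (-Real.logb 2 (Q ω)) + (p ω * Q ω * pD ω / pAD ω - p ω) / Real.log 2 := by
    intro ω
    rcases eq_or_lt_of_le (hp ω) with h0 | h0
    · rw [← h0]
      simp
    · have hpad : 0 < pAD ω := lt_of_lt_of_le h0 (hple ω)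
      have hpd : 0 < pD ω := lt_of_lt_of_le hpad (hADle ω)
      have hq : 0 < Q ω := qfun_pos _
      have hlogid : Real.logb 2 (pD ω) - Real.logb 2 (pAD ω)
          = Real.logb 2 (Q ω * pD ω / pAD ω) + (- Real.logb 2 (Q ω)) := by
        rw [Real.logb_div (by positivity) (ne_of_gt hpad),
          Real.logb_mul (ne_of_gt hq) (ne_of_gt hpd)]
        ring
      rw [hlogid, mul_add]
      have hlb : Real.logb 2 (Q ω * pD ω / pAD ω) ≤ (Q ω * pD ω / pAD ω - 1) / Real.log 2 := by
        rw [Real.logb]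
        have h1 : Real.log (Q ω * pD ω / pAD ω) ≤ Q ω * pD ω / pAD ω - 1 :=
          Real.log_le_sub_one_of_pos (by positivity)
        gcongr
      have h2 : p ω * Real.logb 2 (Q ω * pD ω / pAD ω)
          ≤ p ω * ((Q ω * pD ω / pAD ω - 1) / Real.log 2) :=
        mul_le_mul_of_nonneg_left hlb h0.le
      have h3 : p ω * ((Q ω * pD ω / pAD ω - 1) / Real.log 2)
          = (p ω * Q ω * pD ω / pAD ω - p ω) / Real.log 2 := by
        field_simp
      linarith
  have hT : ∑ ω, p ω * Q ω * pD ω / pAD ω ≤ 1 := T_le_one p hp hsum A D S hS hint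
  have hsum1 : ∑ ω, (p ω * Q ω * pD ω / pAD ω - p ω)
      = (∑ ω, p ω * Q ω * pD ω / pAD ω) - 1 := by
    rw [Finset.sum_sub_distrib, hsum]
  have hQb : ∀ ω, p ω * (-Real.logb 2 (Q ω))
      ≤ p ω * (Real.logb 2 (4/3) + 6 * S^2 * (D ω - A ω)^2) := by
    intro ω
    obtain ⟨k, hk⟩ := hint ω
    have hb := neg_logb_qfun k
    rw [← hk] at hb
    apply mul_le_mul_of_nonneg_left _ (hp ω)
    calc -Real.logb 2 (Q ω) ≤ Real.logb 2 (4/3) + 6 * (S * (D ω - A ω))^2 := hb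
      _ = Real.logb 2 (4/3) + 6 * S^2 * (D ω - A ω)^2 := by ring
  rw [hCE]
  calc ∑ ω, p ω * (Real.logb 2 (pD ω) - Real.logb 2 (pAD ω))
      ≤ ∑ ω, (p ω * (-Real.logb 2 (Q ω)) + (p ω * Q ω * pD ω / pAD ω - p ω) / Real.log 2) :=
        Finset.sum_le_sum (fun ω _ => hpoint ω)
    _ = (∑ ω, p ω * (-Real.logb 2 (Q ω)))
        + ((∑ ω, p ω * Q ω * pD ω / pAD ω) - 1) / Real.log 2 := by
        rw [Finset.sum_add_distrib, ← Finset.sum_div, hsum1]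
    _ ≤ (∑ ω, p ω * (-Real.logb 2 (Q ω))) + 0 := by
        apply add_le_add_right
        apply div_nonpos_of_nonpos_of_nonneg (by linarith) logb_two_pos.le
    _ ≤ (∑ ω, p ω * (Real.logb 2 (4/3) + 6 * S^2 * (D ω - A ω)^2)) + 0 :=
        add_le_add_left (Finset.sum_le_sum (fun ω _ => hQb ω)) 0
    _ = Real.logb 2 (4/3) + 6 * S^2 * ∑ ω, p ω * (D ω - A ω)^2 := by
        rw [add_zero]
        simp only [mul_add]
        rw [Finset.sum_add_distrib, ← Finset.sum_mul, hsum, one_mul]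
        congr 1
        rw [Finset.mul_sum]
        exact Finset.sum_congr rfl (fun ω _ => by ring)

/-- If `θ` is uniform on the grid `K_S = {i/S : i < S}` with `S = 2^(B+1)`, the
estimator `θhat` takes values in `K_S`, and `I(θhat; θ) ≤ B` bits, then
`H(θ | θhat) ≥ 1` and `E[(θhat - θ)²] ≥ c · 2^(-2B)` for a universal `c > 0`. -/
theorem lower_bound_localization_phase :
    ∃ c : ℝ, c > 0 ∧
      ∀ (B : ℕ) (Ω : Type) (_ : Fintype Ω) (p : Ω → ℝ) (θ θhat : Ω → ℝ),
        (∀ ω, 0 ≤ p ω) → (∑ ω, p ω) = 1 →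
        -- θ is uniformly distributed on K_S, S = 2^(B+1)
        (∀ ω, ∃ i : ℕ, i < 2 ^ (B + 1) ∧ θ ω = (i : ℝ) / 2 ^ (B + 1)) →
        (∀ i : ℕ, i < 2 ^ (B + 1) →
          (∑ ω, if θ ω = (i : ℝ) / 2 ^ (B + 1) then p ω else 0) = 1 / 2 ^ (B + 1)) →
        -- θhat takes values in K_S
        (∀ ω, ∃ i : ℕ, i < 2 ^ (B + 1) ∧ θhat ω = (i : ℝ) / 2 ^ (B + 1)) →
        mutualInfo p θhat θ ≤ (B : ℝ) →
        condEntropy p θ θhat ≥ 1 ∧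
        (∑ ω, p ω * (θhat ω - θ ω) ^ 2) ≥ c * 2 ^ (-(2 * B : ℤ)) := by
  classical
  refine ⟨1/48, by norm_num, ?_⟩
  intro B Ω _ p θ θhat hp hsum hθgrid hunif hhatgrid hI
  have hS2 : (0:ℝ) < 2^(B+1) := by positivity
  -- entropy of θ is B+1
  have Hθ : shannonEntropy p θ = B + 1 := by
    unfold shannonEntropy
    have hterm : ∀ ω : Ω, p ω * Real.logb 2 (∑ ω', if θ ω' = θ ω then p ω' else 0)
        = p ω * (-(B+1)) := by
      intro ω
      obtain ⟨i, hi, hθω⟩ := hθgrid ω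
      have hin : (∑ ω', if θ ω' = θ ω then p ω' else 0) = 1/2^(B+1) := by
        rw [show (∑ ω', if θ ω' = θ ω then p ω' else 0)
            = ∑ ω', if θ ω' = (i:ℝ)/2^(B+1) then p ω' else 0 from
          Finset.sum_congr rfl (fun ω' _ => by rw [hθω])]
        exact hunif i hi
      rw [hin]
      congr 1
      rw [one_div, Real.logb_inv, Real.logb_pow, Real.logb_self_eq_one (by norm_num)]
      push_cast; ring
    rw [Finset.sum_congr rfl (fun ω _ => hterm ω), ← Finset.sum_mul, hsum]
    ring
  -- swap symmetry of pair entropy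
  have hswap : shannonEntropy p (fun ω => (θhat ω, θ ω))
      = shannonEntropy p (fun ω => (θ ω, θhat ω)) := by
    unfold shannonEntropy
    congr 1
    apply Finset.sum_congr rfl
    intro ω _
    have hin : (∑ ω', if (θhat ω', θ ω') = (θhat ω, θ ω) then p ω' else 0)
        = (∑ ω', if (θ ω', θhat ω') = (θ ω, θhat ω) then p ω' else 0) := by
      apply Finset.sum_congr rfl
      intro ω' _
      have hiff : ((θhat ω', θ ω') = (θhat ω, θ ω)) ↔ ((θ ω', θhat ω') = (θ ω, θhat ω)) := by
        constructor <;> intro h <;>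
          (simp only [Prod.mk.injEq] at h ⊢; exact ⟨h.2, h.1⟩)
      rw [if_congr hiff rfl rfl]
    rw [hin]
  have hCE1 : condEntropy p θ θhat ≥ 1 := by
    unfold mutualInfo at hI
    unfold condEntropy
    rw [← hswap]
    have : shannonEntropy p θ = (B:ℝ) + 1 := Hθ
    linarith
  refine ⟨hCE1, ?_⟩
  -- quantitative part
  have hZint : ∀ ω, ∃ k : ℤ, (2:ℝ)^(B+1) * (θhat ω - θ ω) = (k:ℝ) := by
    intro ω
    obtain ⟨i, hi, hθ⟩ := hθgrid ω
    obtain ⟨j, hj, hθh⟩ := hhatgrid ω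
    refine ⟨(j:ℤ) - (i:ℤ), ?_⟩
    rw [hθ, hθh]
    push_cast
    field_simp
  have hkey := key_bound p hp hsum θ θhat ((2:ℝ)^(B+1)) (ne_of_gt hS2) hZint
  have h43 : Real.logb 2 (4/3) ≤ 1/2 := by
    have h1 : Real.logb 2 (((4:ℝ)/3)^(2:ℕ)) ≤ Real.logb 2 2 := by
      rw [Real.logb_le_logb (by norm_num) (by norm_num) (by norm_num)]
      norm_num
    rw [Real.logb_pow, Real.logb_self_eq_one (by norm_num)] at h1
    push_cast at h1
    linarith
  have hE : ∑ ω, p ω * (θhat ω - θ ω)^2 ≥ 1 / (12 * ((2:ℝ)^(B+1))^2) := by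
    have h1 : (1:ℝ) ≤ 1/2 + 6 * ((2:ℝ)^(B+1))^2 * ∑ ω, p ω * (θhat ω - θ ω)^2 := by
      calc (1:ℝ) ≤ condEntropy p θ θhat := hCE1
        _ ≤ Real.logb 2 (4/3) + 6 * ((2:ℝ)^(B+1))^2 * ∑ ω, p ω * (θhat ω - θ ω)^2 := hkey
        _ ≤ 1/2 + 6 * ((2:ℝ)^(B+1))^2 * ∑ ω, p ω * (θhat ω - θ ω)^2 := by
            have hEnn : (0:ℝ) ≤ ∑ ω, p ω * (θhat ω - θ ω)^2 :=
              Finset.sum_nonneg (fun ω _ => mul_nonneg (hp ω) (sq_nonneg _))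
            linarith
    rw [ge_iff_le, div_le_iff₀ (by positivity)]
    nlinarith [sq_nonneg ((2:ℝ)^(B+1))]
  have hpow : (1:ℝ)/48 * 2 ^ (-(2 * B : ℤ)) = 1 / (12 * ((2:ℝ)^(B+1))^2) := by
    rw [zpow_neg]
    rw [show ((2 * B : ℤ)) = ((2*B : ℕ) : ℤ) by push_cast; ring, zpow_natCast]
    rw [show ((2:ℝ)^(B+1))^2 = 2^(2*B) * 4 by
      rw [← pow_mul, show (B+1)*2 = 2*B+2 by ring, pow_add]; norm_num]
    have : ((2:ℝ)^(2*B)) ≠ 0 := by positivity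
    field_simp
    ring
  rw [hpow]
  exact hE
end

section
/- Let u be uniform on {0, 1, ..., N−1} (N ≥ 2) and let û be any integer-valued random variable (on the same probability space) with I(û; u) ≤ log₂ N − 1. Then H(u | û) ≥ 1, and hence there is a universal constant c > 0 such that E[(û − u)²] ≥ c. -/
open Finset

/- ## Auxiliary lemmas -/

lemma geo_range (m : ℕ) : ∑ n ∈ Finset.range m, ((8:ℝ)⁻¹) ^ n ≤ 8/7 := by
  rw [geom_sum_eq (by norm_num : ((8:ℝ)⁻¹) ≠ 1)]
  rw [div_le_iff_of_neg (by norm_num : ((8:ℝ)⁻¹ - 1) < (0:ℝ))]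
  have h : (0:ℝ) ≤ ((8:ℝ)⁻¹) ^ m := by positivity
  nlinarith

lemma geo_nat (S : Finset ℕ) : ∑ n ∈ S, ((8:ℝ)⁻¹) ^ n ≤ 8/7 :=
  le_trans (Finset.sum_le_sum_of_subset_of_nonneg
    (fun n hn => Finset.mem_range.mpr (Nat.lt_succ_of_le (Finset.le_sup (f := id) hn)))
    (fun _ _ _ => by positivity)) (geo_range _)

lemma geo_nat' (S : Finset ℕ) (hS : ∀ n ∈ S, n ≠ 0) : ∑ n ∈ S, ((8:ℝ)⁻¹) ^ n ≤ 1/7 := by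
  have hsub : S ⊆ (Finset.range (S.sup id + 1)).erase 0 := fun n hn =>
    Finset.mem_erase.mpr ⟨hS n hn,
      Finset.mem_range.mpr (Nat.lt_succ_of_le (Finset.le_sup (f := id) hn))⟩
  have h1 : ∑ n ∈ S, ((8:ℝ)⁻¹) ^ n
      ≤ ∑ n ∈ (Finset.range (S.sup id + 1)).erase 0, ((8:ℝ)⁻¹) ^ n :=
    Finset.sum_le_sum_of_subset_of_nonneg hsub (fun _ _ _ => by positivity)
  rw [Finset.sum_erase_eq_sub (Finset.mem_range.mpr (Nat.succ_pos _))] at h1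
  rw [pow_zero] at h1
  have h2 := geo_range (S.sup id + 1)
  linarith

/-- The "prior" distribution on ℤ used in the Gibbs argument. -/
noncomputable def qd (z : ℤ) : ℝ := (Real.sqrt 2)⁻¹ * ((8:ℝ)⁻¹) ^ z.natAbs

lemma qd_pos (z : ℤ) : 0 < qd z := by
  unfold qd
  have : (0:ℝ) < Real.sqrt 2 := by positivity
  positivity

lemma qsum (F : Finset ℤ) : ∑ z ∈ F, qd z ≤ 1 := by
  classical
  have hsqrt : (9:ℝ)/7 ≤ Real.sqrt 2 := by
    nlinarith [Real.sq_sqrt (by norm_num : (0:ℝ) ≤ 2), Real.sqrt_nonneg 2]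
  have hpos : (0:ℝ) < Real.sqrt 2 := by positivity
  have key : ∑ z ∈ F, ((8:ℝ)⁻¹) ^ z.natAbs ≤ 9/7 := by
    rw [← Finset.sum_filter_add_sum_filter_not F (fun z => 0 ≤ z)]
    have hinj1 : ∀ x ∈ F.filter (fun z => 0 ≤ z), ∀ y ∈ F.filter (fun z => 0 ≤ z),
        x.natAbs = y.natAbs → x = y := by
      intro x hx y hy hxy
      simp only [Finset.mem_filter] at hx hy
      omega
    have hinj2 : ∀ x ∈ F.filter (fun z => ¬ 0 ≤ z), ∀ y ∈ F.filter (fun z => ¬ 0 ≤ z),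
        x.natAbs = y.natAbs → x = y := by
      intro x hx y hy hxy
      simp only [Finset.mem_filter] at hx hy
      omega
    have h1 : ∑ z ∈ F.filter (fun z => 0 ≤ z), ((8:ℝ)⁻¹) ^ z.natAbs ≤ 8/7 := by
      calc ∑ z ∈ F.filter (fun z => 0 ≤ z), ((8:ℝ)⁻¹) ^ z.natAbs
          = ∑ n ∈ (F.filter (fun z => 0 ≤ z)).image Int.natAbs, ((8:ℝ)⁻¹) ^ n :=
            (Finset.sum_image hinj1).symm
        _ ≤ 8/7 := geo_nat _
    have h2 : ∑ z ∈ F.filter (fun z => ¬ 0 ≤ z), ((8:ℝ)⁻¹) ^ z.natAbs ≤ 1/7 := by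
      calc ∑ z ∈ F.filter (fun z => ¬ 0 ≤ z), ((8:ℝ)⁻¹) ^ z.natAbs
          = ∑ n ∈ (F.filter (fun z => ¬ 0 ≤ z)).image Int.natAbs, ((8:ℝ)⁻¹) ^ n :=
            (Finset.sum_image hinj2).symm
        _ ≤ 1/7 := by
            apply geo_nat'
            intro n hn
            simp only [Finset.mem_image, Finset.mem_filter] at hn
            obtain ⟨z, ⟨_, hz⟩, rfl⟩ := hn
            omega
    linarith
  calc ∑ z ∈ F, qd z = (Real.sqrt 2)⁻¹ * ∑ z ∈ F, ((8:ℝ)⁻¹) ^ z.natAbs := by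
        rw [Finset.mul_sum]; rfl
    _ ≤ (Real.sqrt 2)⁻¹ * (9/7) := by
        apply mul_le_mul_of_nonneg_left key (by positivity)
    _ ≤ 1 := by
        rw [inv_mul_le_iff₀ hpos]
        linarith

lemma logb_qd (z : ℤ) : Real.logb 2 (qd z) = -(1/2) - 3 * z.natAbs := by
  have hlog2 : (0:ℝ) < Real.log 2 := Real.log_pos one_lt_two
  have hsqpos : (0:ℝ) < Real.sqrt 2 := by positivity
  unfold qd
  rw [Real.logb_mul (by positivity) (by positivity), Real.logb_inv, Real.logb_pow,
    Real.logb_inv]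
  have h8 : Real.logb 2 8 = 3 := by
    rw [show (8:ℝ) = 2^(3:ℕ) by norm_num, Real.logb_pow,
      Real.logb_self_eq_one (by norm_num)]
    norm_num
  have hsq : Real.logb 2 (Real.sqrt 2) = 1/2 := by
    rw [Real.logb, Real.log_sqrt (by norm_num)]
    field_simp
  rw [h8, hsq]
  ring

/-- The key Fano-type inequality: conditional entropy is bounded by
`1/2 + 3 E[(A - D)²]`, via Gibbs' inequality with prior `qd`. -/
lemma condEntropy_le {Ω : Type} [Fintype Ω] (p : Ω → ℝ) (hp : ∀ ω, 0 ≤ p ω)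
    (hs : ∑ ω, p ω = 1) (A D : Ω → ℤ) :
    condEntropy p A D ≤ ∑ ω, p ω * (1/2 + 3 * ((A ω : ℝ) - (D ω : ℝ))^2) := by
  classical
  have hL2 : (0:ℝ) < Real.log 2 := Real.log_pos one_lt_two
  set g : Ω → ℤ × ℤ := fun ω => (A ω, D ω) with hg
  set PD : ℤ → ℝ := fun d => ∑ ω', if D ω' = d then p ω' else 0 with hPDdef
  set PG : ℤ × ℤ → ℝ := fun v => ∑ ω', if g ω' = v then p ω' else 0 with hPGdef
  have hPD0 : ∀ d, 0 ≤ PD d := by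
    intro d
    apply Finset.sum_nonneg
    intro ω' _
    by_cases h : D ω' = d <;> simp [h, hp ω']
  have hPG0 : ∀ v, 0 ≤ PG v := by
    intro v
    apply Finset.sum_nonneg
    intro ω' _
    by_cases h : g ω' = v <;> simp [h, hp ω']
  have hple : ∀ ω, p ω ≤ PG (g ω) := by
    intro ω
    have := Finset.single_le_sum (f := fun ω' => if g ω' = g ω then p ω' else 0)
      (fun ω' _ => by by_cases h : g ω' = g ω <;> simp [h, hp ω']) (Finset.mem_univ ω)
    simpa using this
  have hGle : ∀ ω, PG (g ω) ≤ PD (D ω) := by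
    intro ω
    refine Finset.sum_le_sum fun ω' _ => ?_
    by_cases h : g ω' = g ω
    · have h2 : D ω' = D ω := by
        have := congrArg Prod.snd h
        simpa [hg] using this
      rw [if_pos h, if_pos h2]
    · rw [if_neg h]
      split_ifs with h2
      · exact hp ω'
      · exact le_refl 0
  -- the conditional entropy as a single sum
  have hCE : condEntropy p A D
      = ∑ ω, p ω * (Real.logb 2 (PD (D ω)) - Real.logb 2 (PG (g ω))) := by
    simp only [condEntropy, shannonEntropy, hPDdef, hPGdef, hg, mul_sub,
      Finset.sum_sub_distrib]
    ring
  -- the Gibbs sum S is at most 1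
  have hS : ∑ ω, p ω * (qd (A ω - D ω) * PD (D ω) / PG (g ω)) ≤ 1 := by
    have maps1 : ∀ ω ∈ (univ : Finset Ω), g ω ∈ univ.image g :=
      fun ω _ => Finset.mem_image_of_mem g (Finset.mem_univ ω)
    rw [← Finset.sum_fiberwise_of_maps_to maps1
      (fun ω => p ω * (qd (A ω - D ω) * PD (D ω) / PG (g ω)))]
    have step1 : ∀ v ∈ univ.image g,
        ∑ ω ∈ univ.filter (fun ω => g ω = v), p ω * (qd (A ω - D ω) * PD (D ω) / PG (g ω))
        ≤ qd (v.1 - v.2) * PD v.2 := by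
      intro v hv
      have ePG : PG v = ∑ ω ∈ univ.filter (fun ω => g ω = v), p ω := by
        rw [Finset.sum_filter]
      have e1 : ∑ ω ∈ univ.filter (fun ω => g ω = v),
            p ω * (qd (A ω - D ω) * PD (D ω) / PG (g ω))
          = PG v * (qd (v.1 - v.2) * PD v.2 / PG v) := by
        rw [ePG, Finset.sum_mul]
        refine Finset.sum_congr rfl fun ω hω => ?_
        have hgω : g ω = v := (Finset.mem_filter.mp hω).2
        have hA : A ω = v.1 := by rw [← hgω]
        have hD : D ω = v.2 := by rw [← hgω]
        rw [hgω, hA, hD, ePG]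
      rw [e1]
      rcases eq_or_lt_of_le (hPG0 v) with h0 | h0
      · rw [← h0, zero_mul]
        exact mul_nonneg (le_of_lt (qd_pos _)) (hPD0 _)
      · rw [mul_comm, div_mul_cancel₀ _ (ne_of_gt h0)]
    calc ∑ v ∈ univ.image g,
          ∑ ω ∈ univ.filter (fun ω => g ω = v),
            p ω * (qd (A ω - D ω) * PD (D ω) / PG (g ω))
        ≤ ∑ v ∈ univ.image g, qd (v.1 - v.2) * PD v.2 := Finset.sum_le_sum step1
      _ ≤ 1 := by
        have maps2 : ∀ v ∈ univ.image g, v.2 ∈ univ.image D := by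
          intro v hv
          obtain ⟨ω, _, rfl⟩ := Finset.mem_image.mp hv
          exact Finset.mem_image_of_mem D (Finset.mem_univ ω)
        rw [← Finset.sum_fiberwise_of_maps_to maps2 (fun v => qd (v.1 - v.2) * PD v.2)]
        have step2 : ∀ d ∈ univ.image D,
            ∑ v ∈ (univ.image g).filter (fun v => v.2 = d), qd (v.1 - v.2) * PD v.2
            ≤ PD d := by
          intro d hd
          have e2 : ∑ v ∈ (univ.image g).filter (fun v => v.2 = d), qd (v.1 - v.2) * PD v.2
              = (∑ v ∈ (univ.image g).filter (fun v => v.2 = d), qd (v.1 - d)) * PD d := by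
            rw [Finset.sum_mul]
            refine Finset.sum_congr rfl fun v hv => ?_
            rw [(Finset.mem_filter.mp hv).2]
          rw [e2]
          have hinj : ∀ x ∈ (univ.image g).filter (fun v => v.2 = d),
              ∀ y ∈ (univ.image g).filter (fun v => v.2 = d), x.1 - d = y.1 - d → x = y := by
            intro x hx y hy hxy
            have hx2 := (Finset.mem_filter.mp hx).2
            have hy2 := (Finset.mem_filter.mp hy).2
            have h1 : x.1 = y.1 := by omega
            exact Prod.ext h1 (hx2.trans hy2.symm)
          have hq1 : ∑ v ∈ (univ.image g).filter (fun v => v.2 = d), qd (v.1 - d) ≤ 1 := by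
            calc ∑ v ∈ (univ.image g).filter (fun v => v.2 = d), qd (v.1 - d)
                = ∑ z ∈ ((univ.image g).filter (fun v => v.2 = d)).image (fun v => v.1 - d),
                    qd z := (Finset.sum_image hinj).symm
              _ ≤ 1 := qsum _
          calc (∑ v ∈ (univ.image g).filter (fun v => v.2 = d), qd (v.1 - d)) * PD d
              ≤ 1 * PD d := mul_le_mul_of_nonneg_right hq1 (hPD0 d)
            _ = PD d := one_mul _
        calc ∑ d ∈ univ.image D,
              ∑ v ∈ (univ.image g).filter (fun v => v.2 = d), qd (v.1 - v.2) * PD v.2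
            ≤ ∑ d ∈ univ.image D, PD d := Finset.sum_le_sum step2
          _ = 1 := by
            rw [← hs, ← Finset.sum_fiberwise_of_maps_to
              (fun ω _ => Finset.mem_image_of_mem D (Finset.mem_univ ω)) p]
            refine Finset.sum_congr rfl fun d _ => ?_
            rw [Finset.sum_filter]
  -- termwise Gibbs inequality
  have hterm : ∀ ω ∈ (univ : Finset Ω),
      p ω * (Real.logb 2 (PD (D ω)) - Real.logb 2 (PG (g ω)))
      ≤ p ω * (1/2 + 3 * ((A ω : ℝ) - (D ω : ℝ))^2)
        + (p ω * (qd (A ω - D ω) * PD (D ω) / PG (g ω)) - p ω) / Real.log 2 := by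
    intro ω _
    rcases (hp ω).eq_or_lt with h0 | h0
    · rw [← h0]; simp
    · have hpg : 0 < PG (g ω) := lt_of_lt_of_le h0 (hple ω)
      have hpd : 0 < PD (D ω) := lt_of_lt_of_le hpg (hGle ω)
      have hqp := qd_pos (A ω - D ω)
      have hx : 0 < qd (A ω - D ω) * PD (D ω) / PG (g ω) := by positivity
      have e : Real.logb 2 (PD (D ω)) - Real.logb 2 (PG (g ω))
          = Real.logb 2 (qd (A ω - D ω) * PD (D ω) / PG (g ω))
            - Real.logb 2 (qd (A ω - D ω)) := by
        rw [Real.logb_div (by positivity) (ne_of_gt hpg),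
          Real.logb_mul (ne_of_gt hqp) (ne_of_gt hpd)]
        ring
      have hlb : Real.logb 2 (qd (A ω - D ω) * PD (D ω) / PG (g ω))
          ≤ (qd (A ω - D ω) * PD (D ω) / PG (g ω) - 1) / Real.log 2 := by
        rw [Real.logb]
        exact (div_le_div_iff_of_pos_right hL2).mpr (Real.log_le_sub_one_of_pos hx)
      have hlq : -Real.logb 2 (qd (A ω - D ω)) ≤ 1/2 + 3 * ((A ω : ℝ) - (D ω : ℝ))^2 := by
        rw [logb_qd]
        have hn : (A ω - D ω).natAbs ≤ (A ω - D ω).natAbs ^ 2 :=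
          Nat.le_self_pow two_ne_zero _
        have hc : (((A ω - D ω).natAbs : ℝ)) ≤ (((A ω - D ω).natAbs : ℝ)) ^ 2 := by
          exact_mod_cast hn
        have he : (((A ω - D ω).natAbs : ℝ)) ^ 2 = ((A ω : ℝ) - (D ω : ℝ))^2 := by
          have : (((A ω - D ω).natAbs : ℝ)) = |((A ω : ℝ) - (D ω : ℝ))| := by
            rw [Nat.cast_natAbs]
            push_cast
            ring
          rw [this, sq_abs]
        rw [he] at hc
        linarith
      calc p ω * (Real.logb 2 (PD (D ω)) - Real.logb 2 (PG (g ω)))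
          = p ω * ((- Real.logb 2 (qd (A ω - D ω)))
              + Real.logb 2 (qd (A ω - D ω) * PD (D ω) / PG (g ω))) := by rw [e]; ring
        _ ≤ p ω * ((1/2 + 3 * ((A ω : ℝ) - (D ω : ℝ))^2)
              + (qd (A ω - D ω) * PD (D ω) / PG (g ω) - 1) / Real.log 2) := by
            apply mul_le_mul_of_nonneg_left _ (hp ω)
            exact add_le_add hlq hlb
        _ = p ω * (1/2 + 3 * ((A ω : ℝ) - (D ω : ℝ))^2)
              + (p ω * (qd (A ω - D ω) * PD (D ω) / PG (g ω)) - p ω) / Real.log 2 := by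
            ring
  rw [hCE]
  have hsumle := Finset.sum_le_sum hterm
  have esum : ∑ ω, (p ω * (1/2 + 3 * ((A ω : ℝ) - (D ω : ℝ))^2)
        + (p ω * (qd (A ω - D ω) * PD (D ω) / PG (g ω)) - p ω) / Real.log 2)
      = (∑ ω, p ω * (1/2 + 3 * ((A ω : ℝ) - (D ω : ℝ))^2))
        + ((∑ ω, p ω * (qd (A ω - D ω) * PD (D ω) / PG (g ω))) - 1) / Real.log 2 := by
    rw [Finset.sum_add_distrib]
    congr 1
    rw [← Finset.sum_div, Finset.sum_sub_distrib, hs]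
  rw [esum] at hsumle
  have hfin : ((∑ ω, p ω * (qd (A ω - D ω) * PD (D ω) / PG (g ω))) - 1) / Real.log 2 ≤ 0 :=
    div_nonpos_of_nonpos_of_nonneg (by linarith) (le_of_lt hL2)
  linarith

lemma shannon_swap {Ω : Type} [Fintype Ω] (p : Ω → ℝ) (A B : Ω → ℤ) :
    shannonEntropy p (fun ω => (A ω, B ω)) = shannonEntropy p (fun ω => (B ω, A ω)) := by
  unfold shannonEntropy
  congr 1
  refine Finset.sum_congr rfl fun ω _ => ?_
  congr 2
  refine Finset.sum_congr rfl fun ω' _ => ?_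
  refine if_congr ?_ rfl rfl
  simp only [Prod.mk.injEq]
  exact and_comm

lemma shannon_uniform {Ω : Type} [Fintype Ω] (N : ℕ) (p : Ω → ℝ)
    (hs : ∑ ω, p ω = 1) (u : Ω → ℤ)
    (hrange : ∀ ω, 0 ≤ u ω ∧ u ω < N)
    (hunif : ∀ i : ℤ, 0 ≤ i → i < N → (∑ ω, if u ω = i then p ω else 0) = 1 / N) :
    shannonEntropy p u = Real.logb 2 N := by
  unfold shannonEntropy
  have h1 : ∀ ω : Ω, (∑ ω', if u ω' = u ω then p ω' else 0) = 1 / N := fun ω =>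
    hunif (u ω) (hrange ω).1 (hrange ω).2
  calc -∑ ω, p ω * Real.logb 2 (∑ ω', if u ω' = u ω then p ω' else 0)
      = -∑ ω, p ω * Real.logb 2 (1 / (N:ℝ)) :=
        congrArg Neg.neg (Finset.sum_congr rfl fun ω _ => by rw [h1 ω])
    _ = Real.logb 2 N := by
        rw [← Finset.sum_mul, hs, one_mul, one_div, Real.logb_inv, neg_neg]

lemma main_aux {Ω : Type} [Fintype Ω] (N : ℕ) (p : Ω → ℝ) (u uhat : Ω → ℤ)
    (hN : 2 ≤ N) (hp : ∀ ω, 0 ≤ p ω) (hs : (∑ ω, p ω) = 1)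
    (hrange : ∀ ω, 0 ≤ u ω ∧ u ω < N)
    (hunif : ∀ i : ℤ, 0 ≤ i → i < N → (∑ ω, if u ω = i then p ω else 0) = 1 / N)
    (hMI : mutualInfo p uhat u ≤ Real.logb 2 N - 1) :
    condEntropy p u uhat ≥ 1 ∧
    (∑ ω, p ω * ((uhat ω : ℝ) - (u ω : ℝ)) ^ 2) ≥ 1/6 := by
  have hH : condEntropy p u uhat ≥ 1 := by
    have hswap := shannon_swap p u uhat
    have hU := shannon_uniform N p hs u hrange hunif
    simp only [condEntropy, mutualInfo] at hMI ⊢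
    rw [hswap]
    linarith
  refine ⟨hH, ?_⟩
  have hE := condEntropy_le p hp hs u uhat
  have hsum : ∑ ω, p ω * (1/2 + 3 * ((u ω : ℝ) - (uhat ω : ℝ))^2)
      = 1/2 + 3 * ∑ ω, p ω * ((uhat ω : ℝ) - (u ω : ℝ))^2 := by
    have h1 : ∀ ω : Ω, p ω * (1/2 + 3 * ((u ω : ℝ) - (uhat ω : ℝ))^2)
        = p ω * (1/2) + 3 * (p ω * ((uhat ω : ℝ) - (u ω : ℝ))^2) := fun ω => by ring
    rw [Finset.sum_congr rfl fun ω _ => h1 ω, Finset.sum_add_distrib,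
      ← Finset.sum_mul, hs, ← Finset.mul_sum]
    ring
  rw [hsum] at hE
  linarith

/-- If `u` is uniform on `{0, ..., N-1}` (N ≥ 2) and `uhat` is any
integer-valued random variable with `I(uhat; u) ≤ log₂ N - 1`, then
`H(u | uhat) ≥ 1` and `E[(uhat - u)²] ≥ c` for a universal constant `c > 0`. -/
theorem low_information_implies_large_error :
    ∃ c : ℝ, c > 0 ∧
      ∀ (N : ℕ) (Ω : Type) (_ : Fintype Ω) (p : Ω → ℝ) (u uhat : Ω → ℤ),
        2 ≤ N →
        (∀ ω, 0 ≤ p ω) → (∑ ω, p ω) = 1 →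
        -- u is uniformly distributed on {0, 1, ..., N-1}
        (∀ ω, 0 ≤ u ω ∧ u ω < N) →
        (∀ i : ℤ, 0 ≤ i → i < N →
          (∑ ω, if u ω = i then p ω else 0) = 1 / N) →
        mutualInfo p uhat u ≤ Real.logb 2 N - 1 →
        condEntropy p u uhat ≥ 1 ∧
        (∑ ω, p ω * ((uhat ω : ℝ) - (u ω : ℝ)) ^ 2) ≥ c := by
  refine ⟨1/6, by norm_num, ?_⟩
  intro N Ω inst p u uhat hN hp hs hrange hunif hMI
  exact @main_aux Ω inst N p u uhat hN hp hs hrange hunif hMI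
end
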